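/- For n = 4 with values v_1 < v_2 < v_3 < v_4, there are exactly 6 circuits, and the 7 points listed in the dimension proof construction (the circuits corresponding to v_1 followed by cyclic permutations of v_2, v_3, v_4, plus the swap of v_3 and v_4) contain 4 affinely independent circuits, so H_4(v) has dimension 3. -/

import Mathlib

/-- A circuit on `{1,...,n}`: a permutation of `Fin n` that is a single `n`-cycle. -/
def IsCircuitPerm {n : ℕ} (σ : Equiv.Perm (Fin n)) : Prop :=
  σ.IsCycle ∧ σ.support = Finset.univ

/-- A circuit point on values `v`: `x i = v (σ i)` for some single-`n`-cycle permutation `σ`. -/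
def IsCircuitPt {n : ℕ} (v : Fin n → ℝ) (x : Fin n → ℝ) : Prop :=
  ∃ σ : Equiv.Perm (Fin n), IsCircuitPerm σ ∧ ∀ i, x i = v (σ i)

/-- Decidable reformulation of `IsCircuitPerm` for `n = 4`. -/
def CircAux (σ : Equiv.Perm (Fin 4)) : Prop :=
  σ.support = Finset.univ ∧ ∀ y : Fin 4, ∃ k ∈ Finset.range 4, (σ ^ k) 0 = y

instance : DecidablePred CircAux := fun σ => by unfold CircAux; infer_instance

lemma isCircuitPerm_iff_circAux (σ : Equiv.Perm (Fin 4)) :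
    IsCircuitPerm σ ↔ CircAux σ := by
  constructor
  · rintro ⟨hc, hs⟩
    refine ⟨hs, fun y => ?_⟩
    have h0 : σ 0 ≠ 0 :=
      Equiv.Perm.mem_support.mp (hs ▸ Finset.mem_univ (0 : Fin 4))
    have hy : σ y ≠ y := Equiv.Perm.mem_support.mp (hs ▸ Finset.mem_univ y)
    obtain ⟨i, hi, hie⟩ := (hc.sameCycle h0 hy).exists_pow_eq'
    have ho : orderOf σ = 4 := by
      rw [hc.orderOf, hs]; simp
    exact ⟨i, Finset.mem_range.mpr (ho ▸ hi), hie⟩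
  · rintro ⟨hs, hk⟩
    refine ⟨⟨0, Equiv.Perm.mem_support.mp (hs ▸ Finset.mem_univ (0 : Fin 4)),
      fun y _ => ?_⟩, hs⟩
    obtain ⟨k, _, hky⟩ := hk y
    exact ⟨(k : ℤ), by simpa [zpow_natCast] using hky⟩

lemma circ_set_eq :
    {σ : Equiv.Perm (Fin 4) | IsCircuitPerm σ}
      = ↑(Finset.univ.filter CircAux) := by
  ext σ
  simp [isCircuitPerm_iff_circAux]

/-- The four circuit permutations used in the dimension proof. -/
def cp1 : Equiv.Perm (Fin 4) := ⟨![1,2,3,0], ![3,0,1,2], by decide, by decide⟩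
def cp2 : Equiv.Perm (Fin 4) := ⟨![1,3,0,2], ![2,0,3,1], by decide, by decide⟩
def cp3 : Equiv.Perm (Fin 4) := ⟨![2,0,3,1], ![1,3,0,2], by decide, by decide⟩
def cp4 : Equiv.Perm (Fin 4) := ⟨![3,0,1,2], ![1,2,3,0], by decide, by decide⟩

lemma cp_circ : IsCircuitPerm cp1 ∧ IsCircuitPerm cp2 ∧ IsCircuitPerm cp3 ∧
    IsCircuitPerm cp4 := by
  refine ⟨?_, ?_, ?_, ?_⟩ <;> rw [isCircuitPerm_iff_circAux] <;> decide

theorem stmt_18 (v : Fin 4 → ℝ) (hv : StrictMono v) :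
    Set.ncard {x : Fin 4 → ℝ | IsCircuitPt v x} = 6 ∧
    (∃ p : Fin 4 → (Fin 4 → ℝ), AffineIndependent ℝ p ∧ ∀ i, IsCircuitPt v (p i)) ∧
    Module.finrank ℝ
        (vectorSpan ℝ (convexHull ℝ {x : Fin 4 → ℝ | IsCircuitPt v x})) = 3 := by
  set s : Set (Fin 4 → ℝ) := {x | IsCircuitPt v x} with hs_def
  -- the circuit points are the image of the circuit permutations
  have himg : s = (fun σ : Equiv.Perm (Fin 4) => fun i => v (σ i)) ''
      {σ | IsCircuitPerm σ} := by
    ext x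
    constructor
    · rintro ⟨σ, h1, h2⟩
      exact ⟨σ, h1, (funext fun i => (h2 i).symm)⟩
    · rintro ⟨σ, h1, rfl⟩
      exact ⟨σ, h1, fun i => rfl⟩
  have hinj : Function.Injective
      (fun σ : Equiv.Perm (Fin 4) => fun i => v (σ i)) := by
    intro σ τ h
    ext i
    exact congrArg Fin.val (hv.injective (congrFun h i))
  -- Part 1 : exactly 6 circuits
  have hcard : Set.ncard s = 6 := by
    rw [himg, Set.ncard_image_of_injective _ hinj, circ_set_eq,
      Set.ncard_coe_finset]
    decide
  -- Part 2 : four affinely independent circuit points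
  obtain ⟨hc1, hc2, hc3, hc4⟩ := cp_circ
  set p : Fin 4 → (Fin 4 → ℝ) :=
    ![fun i => v (cp1 i), fun i => v (cp2 i), fun i => v (cp3 i),
      fun i => v (cp4 i)] with hp_def
  have hps : ∀ i, p i ∈ s := by
    intro i
    fin_cases i
    · exact ⟨cp1, hc1, fun _ => rfl⟩
    · exact ⟨cp2, hc2, fun _ => rfl⟩
    · exact ⟨cp3, hc3, fun _ => rfl⟩
    · exact ⟨cp4, hc4, fun _ => rfl⟩
  have h01 : v 0 < v 1 := hv (by decide)
  have h12 : v 1 < v 2 := hv (by decide)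
  have h23 : v 2 < v 3 := hv (by decide)
  have haff : AffineIndependent ℝ p := by
    rw [affineIndependent_iff_linearIndependent_vsub ℝ p 0]
    rw [← linearIndependent_equiv (finSuccAboveEquiv (0 : Fin 4))]
    set w : Fin 3 → (Fin 4 → ℝ) :=
      fun j => p ((finSuccAboveEquiv (0 : Fin 4)) j).1 -ᵥ p 0 with hw_def
    show LinearIndependent ℝ w
    have hw : w = ![p 1 - p 0, p 2 - p 0, p 3 - p 0] := by
      funext j
      fin_cases j <;> rfl
    -- project to coordinates 0, 1, 3 and use a determinant computation
    apply LinearIndependent.of_comp (LinearMap.funLeft ℝ ℝ (![0, 1, 3] : Fin 3 → Fin 4))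
    have key : LinearIndependent ℝ
        (fun i => (Matrix.of fun i j => w i ((![0, 1, 3] : Fin 3 → Fin 4) j)) i) := by
      change LinearIndependent ℝ (Matrix.of fun i j => w i ((![0, 1, 3] : Fin 3 → Fin 4) j)).row
      rw [Matrix.linearIndependent_rows_iff_isUnit, Matrix.isUnit_iff_isUnit_det,
        isUnit_iff_ne_zero]
      have hM : (Matrix.of fun i j => w i ((![0, 1, 3] : Fin 3 → Fin 4) j))
          = !![v 1 - v 1, v 3 - v 2, v 2 - v 0;
               v 2 - v 1, v 0 - v 2, v 1 - v 0;
               v 3 - v 1, v 0 - v 2, v 2 - v 0] := by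
        ext i j
        fin_cases i <;> fin_cases j <;> rfl
      have hdet : (Matrix.of fun i j => w i ((![0, 1, 3] : Fin 3 → Fin 4) j)).det
          = (v 1 - v 0) * (v 3 - v 2) * ((v 2 - v 0) + (v 3 - v 1)) := by
        rw [hM, Matrix.det_fin_three]
        simp [Matrix.vecHead, Matrix.vecTail]
        ring
      rw [hdet]
      have hpos : 0 < (v 1 - v 0) * (v 3 - v 2) * ((v 2 - v 0) + (v 3 - v 1)) :=
        mul_pos (mul_pos (by linarith) (by linarith)) (by linarith)
      exact ne_of_gt hpos
    exact key
  -- Part 3 : dimension 3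
  have hspan : vectorSpan ℝ (convexHull ℝ s) = vectorSpan ℝ s := by
    rw [← direction_affineSpan, ← direction_affineSpan, affineSpan_convexHull]
  -- sum functional
  set L : (Fin 4 → ℝ) →ₗ[ℝ] ℝ :=
    { toFun := fun x => ∑ i, x i
      map_add' := fun x y => by simp [Finset.sum_add_distrib]
      map_smul' := fun c x => by simp [Finset.mul_sum] } with hL_def
  have hsum : ∀ x ∈ s, ∑ i, x i = ∑ i, v i := by
    rintro x ⟨σ, hσ, hx⟩
    calc ∑ i, x i = ∑ i, v (σ i) := by
          exact Finset.sum_congr rfl fun i _ => hx i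
      _ = ∑ i, v i := Equiv.sum_comp σ v
  have hle : vectorSpan ℝ s ≤ LinearMap.ker L := by
    rw [vectorSpan_def]
    apply Submodule.span_le.mpr
    rintro z hz
    rw [Set.mem_vsub] at hz
    obtain ⟨x, hx, y, hy, rfl⟩ := hz
    simp only [SetLike.mem_coe, LinearMap.mem_ker, hL_def, LinearMap.coe_mk,
      AddHom.coe_mk]
    show ∑ i, (x -ᵥ y) i = 0
    have : ∀ i, (x -ᵥ y) i = x i - y i := fun i => rfl
    simp only [this, Finset.sum_sub_distrib, hsum x hx, hsum y hy, sub_self]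
  have hker : Module.finrank ℝ (LinearMap.ker L) = 3 := by
    have hsurj : Function.Surjective L := by
      intro t
      refine ⟨fun _ => t / 4, ?_⟩
      show ∑ _i : Fin 4, t / 4 = t
      simp
      ring
    have h1 := LinearMap.finrank_range_add_finrank_ker L
    rw [LinearMap.range_eq_top.mpr hsurj, finrank_top] at h1
    simp only [Module.finrank_self] at h1
    have h2 : Module.finrank ℝ (Fin 4 → ℝ) = 4 := by simp
    omega
  have hhigh : Module.finrank ℝ (vectorSpan ℝ s) ≤ 3 :=
    hker ▸ Submodule.finrank_mono hle
  have hlow : 3 ≤ Module.finrank ℝ (vectorSpan ℝ s) := by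
    have h3 : Module.finrank ℝ (vectorSpan ℝ (Set.range p)) = 3 :=
      haff.finrank_vectorSpan (by simp)
    have hsub : vectorSpan ℝ (Set.range p) ≤ vectorSpan ℝ s :=
      vectorSpan_mono ℝ (by rintro x ⟨i, rfl⟩; exact hps i)
    exact h3 ▸ Submodule.finrank_mono hsub
  exact ⟨hcard, ⟨p, haff, fun i => hps i⟩,
    by rw [hspan]; exact le_antisymm hhigh hlow⟩
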